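/- Let (X,‖·‖) be a separable real Banach space and φ: P_X → P_X a surjective π-isometry. Then φ maps the set Δ_X of Dirac measures onto Δ_X, i.e., φ(Δ_X) = Δ_X. -/

import Mathlib

open MeasureTheory Metric Set TopologicalSpace

/-- The (one-sided) Lévy–Prokhorov distance of two Borel probability measures. -/
noncomputable def LPdist {X : Type*} [MetricSpace X] [MeasurableSpace X]
    (μ ν : ProbabilityMeasure X) : ℝ :=
  sInf {ε : ℝ | 0 < ε ∧ ∀ A : Set X, MeasurableSet A →
    (μ : Measure X) A ≤ (ν : Measure X) (thickening ε A) + ENNReal.ofReal ε}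

/-- The s-Lévy–Prokhorov distance. -/
noncomputable def LPsdist {X : Type*} [MetricSpace X] [MeasurableSpace X]
    (s : ℝ) (μ ν : ProbabilityMeasure X) : ℝ :=
  sInf {ε : ℝ | 0 < ε ∧ ∀ A : Set X, MeasurableSet A →
    ENNReal.ofReal s * (μ : Measure X) A ≤
      ENNReal.ofReal s * (ν : Measure X) (thickening ε A) + ENNReal.ofReal ε}

/-- The support of a Borel probability measure. -/
def mSupport {X : Type*} [MetricSpace X] [MeasurableSpace X]
    (μ : ProbabilityMeasure X) : Set X :=
  {x : X | ∀ r : ℝ, 0 < r → 0 < (μ : Measure X) (ball x r)}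

/-- The Dirac measure as a probability measure. -/
noncomputable def diracPM {X : Type*} [MeasurableSpace X] (x : X) : ProbabilityMeasure X :=
  ⟨Measure.dirac x, inferInstance⟩

/-- Finitely supported probability measures: finite convex combinations of Dirac measures. -/
def IsFinitelySupported {X : Type*} [MeasurableSpace X] (μ : ProbabilityMeasure X) : Prop :=
  ∃ (s : Finset X) (w : X → ℝ), (∀ x ∈ s, 0 < w x) ∧ (∑ x ∈ s, w x = 1) ∧
    (μ : Measure X) = ∑ x ∈ s, ENNReal.ofReal (w x) • Measure.dirac x

/-- The unit distance set of a set of probability measures. -/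
def unitDistSet {X : Type*} [MetricSpace X] [MeasurableSpace X]
    (𝒜 : Set (ProbabilityMeasure X)) : Set (ProbabilityMeasure X) :=
  {ν | ∀ μ ∈ 𝒜, LPdist μ ν = 1}

/-- The witness function. -/
noncomputable def witness {X : Type*} [MetricSpace X] [MeasurableSpace X]
    (μ : ProbabilityMeasure X) (x : X) : ℝ :=
  LPdist (diracPM x) μ

/-- The s-witness function. -/
noncomputable def switness {X : Type*} [MetricSpace X] [MeasurableSpace X]
    (s : ℝ) (μ : ProbabilityMeasure X) (x : X) : ℝ :=
  LPsdist s (diracPM x) μ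

set_option linter.unusedSectionVars false

namespace LPaux

variable {X : Type*} [MetricSpace X] [MeasurableSpace X]

def LPset (μ ν : ProbabilityMeasure X) : Set ℝ :=
  {ε : ℝ | 0 < ε ∧ ∀ A : Set X, MeasurableSet A →
    (μ : Measure X) A ≤ (ν : Measure X) (thickening ε A) + ENNReal.ofReal ε}

lemma LPdist_def (μ ν : ProbabilityMeasure X) : LPdist μ ν = sInf (LPset μ ν) := rfl

lemma one_mem (μ ν : ProbabilityMeasure X) : (1:ℝ) ∈ LPset μ ν := by
  refine ⟨one_pos, fun A _ => ?_⟩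
  calc (μ : Measure X) A ≤ 1 := prob_le_one
  _ = ENNReal.ofReal 1 := by simp
  _ ≤ (ν : Measure X) (thickening 1 A) + ENNReal.ofReal 1 := le_add_self

lemma mem_of_le {μ ν : ProbabilityMeasure X} {a b : ℝ} (ha : a ∈ LPset μ ν) (hab : a ≤ b) :
    b ∈ LPset μ ν := by
  refine ⟨ha.1.trans_le hab, fun A hA => ?_⟩
  calc (μ : Measure X) A ≤ (ν : Measure X) (thickening a A) + ENNReal.ofReal a := ha.2 A hA
  _ ≤ (ν : Measure X) (thickening b A) + ENNReal.ofReal b :=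
      add_le_add (measure_mono (thickening_mono hab A)) (ENNReal.ofReal_le_ofReal hab)

lemma LPset_nonempty (μ ν : ProbabilityMeasure X) : (LPset μ ν).Nonempty := ⟨1, one_mem μ ν⟩

lemma LPset_bddBelow (μ ν : ProbabilityMeasure X) : BddBelow (LPset μ ν) :=
  ⟨0, fun _ h => h.1.le⟩

lemma LPdist_le_one (μ ν : ProbabilityMeasure X) : LPdist μ ν ≤ 1 :=
  csInf_le (LPset_bddBelow μ ν) (one_mem μ ν)

lemma notMem_iff {μ ν : ProbabilityMeasure X} {ε : ℝ} (hε : 0 < ε) :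
    ε ∉ LPset μ ν ↔ ∃ A : Set X, MeasurableSet A ∧
      (ν : Measure X) (thickening ε A) + ENNReal.ofReal ε < (μ : Measure X) A := by
  simp only [LPset, mem_setOf_eq, not_and, not_forall, not_le]
  constructor
  · intro h
    obtain ⟨A, hA, hlt⟩ := h hε
    exact ⟨A, hA, hlt⟩
  · intro ⟨A, hA, hlt⟩ _
    exact ⟨A, hA, hlt⟩

lemma LPdist_eq_one_iff_notMem (μ ν : ProbabilityMeasure X) :
    LPdist μ ν = 1 ↔ ∀ ε : ℝ, 0 < ε → ε < 1 → ε ∉ LPset μ ν := by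
  constructor
  · intro h ε _ hε1 hmem
    exact absurd (csInf_le (LPset_bddBelow μ ν) hmem) (by rw [LPdist_def] at h; linarith)
  · intro h
    refine le_antisymm (LPdist_le_one μ ν) (le_csInf (LPset_nonempty μ ν) fun e he => ?_)
    by_contra hlt
    exact h e he.1 (by linarith) he

lemma mem_of_LPdist_eq_zero {μ ν : ProbabilityMeasure X} (h : LPdist μ ν = 0) {ε : ℝ}
    (hε : 0 < ε) : ε ∈ LPset μ ν := by
  obtain ⟨e, he, hlt⟩ := exists_lt_of_csInf_lt (LPset_nonempty μ ν) (by rw [← LPdist_def, h]; exact hε)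
  exact mem_of_le he hlt.le

end LPaux

namespace LPaux

variable {X : Type*} [MetricSpace X] [MeasurableSpace X]

lemma isClosed_mSupport (μ : ProbabilityMeasure X) : IsClosed (mSupport μ) := by
  rw [← isOpen_compl_iff, isOpen_iff]
  intro x hx
  simp only [mSupport, mem_compl_iff, mem_setOf_eq, not_forall] at hx
  obtain ⟨r, hr, hball⟩ := hx
  refine ⟨r/2, by linarith, fun y hy => ?_⟩
  simp only [mSupport, mem_compl_iff, mem_setOf_eq, not_forall]
  refine ⟨r/2, by linarith, fun hpos => ?_⟩
  have hsub : ball y (r/2) ⊆ ball x r := by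
    intro z hz
    have h1 : dist z y < r/2 := mem_ball.mp hz
    have h2 : dist y x < r/2 := mem_ball.mp hy
    exact mem_ball.mpr ((dist_triangle z y x).trans_lt (by linarith))
  exact hball (hpos.trans_le (measure_mono hsub))

section SC
variable [SecondCountableTopology X]

lemma measure_zero_of_disjoint_mSupport (μ : ProbabilityMeasure X) {s : Set X}
    (h : s ∩ mSupport μ = ∅) : (μ : Measure X) s = 0 := by
  refine measure_null_of_locally_null s fun x hx => ?_
  have hxn : x ∉ mSupport μ := fun hm => (eq_empty_iff_forall_notMem.mp h x) ⟨hx, hm⟩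
  simp only [mSupport, mem_setOf_eq, not_forall] at hxn
  obtain ⟨r, hr, hball⟩ := hxn
  have hb0 : (μ : Measure X) (ball x r) = 0 := by
    by_contra hne
    exact hball (pos_iff_ne_zero.mpr hne)
  exact ⟨s ∩ ball x r, inter_mem_nhdsWithin _ (ball_mem_nhds x hr),
    measure_mono_null inter_subset_right hb0⟩

lemma mSupport_nonempty (μ : ProbabilityMeasure X) : (mSupport μ).Nonempty := by
  by_contra h
  rw [not_nonempty_iff_eq_empty] at h
  have : (μ : Measure X) univ = 0 :=
    measure_zero_of_disjoint_mSupport μ (by rw [h, inter_empty])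
  simp at this

lemma measure_mSupport (μ : ProbabilityMeasure X) : (μ : Measure X) (mSupport μ) = 1 := by
  have h0 : (μ : Measure X) (mSupport μ)ᶜ = 0 :=
    measure_zero_of_disjoint_mSupport μ (by simp [inter_comm])
  have h1 : (1:ENNReal) ≤ (μ : Measure X) (mSupport μ) + (μ : Measure X) (mSupport μ)ᶜ := by
    calc (1:ENNReal) = (μ : Measure X) univ := measure_univ.symm
    _ ≤ _ := by rw [← union_compl_self (mSupport μ)]; exact measure_union_le _ _
  rw [h0, add_zero] at h1
  exact le_antisymm prob_le_one h1

end SC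
end LPaux

namespace LPaux

variable {X : Type*} [MetricSpace X] [MeasurableSpace X]
  [OpensMeasurableSpace X] [SecondCountableTopology X]

lemma LPdist_eq_one_of_sep {μ ν : ProbabilityMeasure X}
    (h : ∀ x ∈ mSupport μ, ∀ y ∈ mSupport ν, 1 ≤ dist x y) : LPdist μ ν = 1 := by
  rw [LPdist_eq_one_iff_notMem]
  intro ε hε hε1 hmem
  have hA : MeasurableSet (mSupport μ) := (isClosed_mSupport μ).measurableSet
  have key := hmem.2 (mSupport μ) hA
  have hthick : (ν : Measure X) (thickening ε (mSupport μ)) = 0 := by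
    refine measure_zero_of_disjoint_mSupport ν ?_
    rw [eq_empty_iff_forall_notMem]
    rintro y ⟨hyt, hys⟩
    obtain ⟨z, hz, hd⟩ := mem_thickening_iff.mp hyt
    exact absurd (h z hz y hys) (by rw [dist_comm] at hd; linarith)
  rw [measure_mSupport, hthick, zero_add] at key
  exact absurd key (not_le.mpr (ENNReal.ofReal_lt_one.mpr hε1))

lemma sep_of_LPdist_eq_one {μ ν : ProbabilityMeasure X} (h : LPdist μ ν = 1) :
    ∀ x ∈ mSupport μ, ∀ y ∈ mSupport ν, 1 ≤ dist x y := by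
  intro x hx y hy
  by_contra hd
  push_neg at hd
  set d := dist x y with hdd
  have hd0 : 0 ≤ d := dist_nonneg
  set ρ : ℝ := (1 - d)/3 with hρ
  have hρ0 : 0 < ρ := by rw [hρ]; linarith
  have hα : 0 < (μ : Measure X) (ball x ρ) := hx ρ hρ0
  have hβ : 0 < (ν : Measure X) (ball y ρ) := hy ρ hρ0
  set a : ℝ := ((μ : Measure X) (ball x ρ)).toReal with ha
  set b : ℝ := ((ν : Measure X) (ball y ρ)).toReal with hb
  have hμfin : (μ : Measure X) (ball x ρ) ≠ ⊤ := (prob_le_one.trans_lt ENNReal.one_lt_top).ne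
  have hνfin : (ν : Measure X) (ball y ρ) ≠ ⊤ := (prob_le_one.trans_lt ENNReal.one_lt_top).ne
  have ha0 : 0 < a := ENNReal.toReal_pos hα.ne' hμfin
  have hb0 : 0 < b := ENNReal.toReal_pos hβ.ne' hνfin
  have ha1 : a ≤ 1 := by
    rw [ha, ← ENNReal.toReal_one]
    exact ENNReal.toReal_mono (by simp) prob_le_one
  have hb1 : b ≤ 1 := by
    rw [hb, ← ENNReal.toReal_one]
    exact ENNReal.toReal_mono (by simp) prob_le_one
  set ε : ℝ := max (d + 2*ρ) (max (1 - a/2) (1 - b/2)) with hε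
  have hε1 : ε < 1 := by
    apply max_lt (by rw [hρ]; linarith) (max_lt (by linarith) (by linarith))
  have hε0 : 0 < ε := lt_of_lt_of_le (by linarith) (le_max_of_le_right (le_max_left _ _))
  have hnotmem : ε ∉ LPset μ ν := (LPdist_eq_one_iff_notMem μ ν).mp h ε hε0 hε1
  obtain ⟨A, hAm, hlt⟩ := (notMem_iff hε0).mp hnotmem
  -- A meets ball x ρ
  have hofReal_lt : ENNReal.ofReal ε < (μ : Measure X) A := lt_of_le_of_lt le_add_self hlt
  have hmeets : (A ∩ ball x ρ).Nonempty := by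
    rw [nonempty_iff_ne_empty]
    intro hemp
    have hsub : A ⊆ (ball x ρ)ᶜ := by
      intro z hz
      intro hzb
      exact (eq_empty_iff_forall_notMem.mp hemp z) ⟨hz, hzb⟩
    have h1 : (μ : Measure X) A ≤ (μ : Measure X) (ball x ρ)ᶜ := measure_mono hsub
    have h2 : (μ : Measure X) (ball x ρ)ᶜ = 1 - (μ : Measure X) (ball x ρ) := by
      rw [measure_compl measurableSet_ball hμfin, measure_univ]
    have h3 : (1:ENNReal) - (μ : Measure X) (ball x ρ) = ENNReal.ofReal (1 - a) := by
      rw [ha, ← ENNReal.ofReal_one]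
      rw [ENNReal.ofReal_sub _ (ENNReal.toReal_nonneg), ENNReal.ofReal_one,
        ENNReal.ofReal_toReal hμfin]
    have h4 : ENNReal.ofReal (1 - a) < ENNReal.ofReal ε := by
      apply ENNReal.ofReal_lt_ofReal_iff hε0 |>.mpr
      have : 1 - a/2 ≤ ε := le_max_of_le_right (le_max_left _ _)
      linarith
    rw [h2, h3] at h1
    exact absurd (h1.trans_lt h4) (not_lt.mpr hofReal_lt.le)
  obtain ⟨w, hwA, hwb⟩ := hmeets
  have hball_sub : ball y ρ ⊆ thickening ε A := by
    intro v hv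
    refine mem_thickening_iff.mpr ⟨w, hwA, ?_⟩
    have h1 : dist v y < ρ := mem_ball.mp hv
    have h2 : dist w x < ρ := mem_ball.mp hwb
    have hdε : d + 2*ρ ≤ ε := le_max_left _ _
    calc dist v w ≤ dist v y + dist y x + dist x w := dist_triangle4 v y x w
    _ < ρ + d + ρ := by rw [dist_comm y x, dist_comm x w]; linarith [hdd, h1, h2]
    _ ≤ ε := by linarith
  have hβ' : (ν : Measure X) (ball y ρ) ≤ (ν : Measure X) (thickening ε A) :=
    measure_mono hball_sub
  have hcontra : (1:ENNReal) < (μ : Measure X) A := by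
    calc (1:ENNReal) = ENNReal.ofReal 1 := by simp
    _ ≤ ENNReal.ofReal (b + (1 - b/2)) := ENNReal.ofReal_le_ofReal (by linarith)
    _ = ENNReal.ofReal b + ENNReal.ofReal (1 - b/2) := ENNReal.ofReal_add hb0.le (by linarith)
    _ ≤ (ν : Measure X) (ball y ρ) + ENNReal.ofReal ε := by
        apply add_le_add
        · rw [hb, ENNReal.ofReal_toReal hνfin]
        · exact ENNReal.ofReal_le_ofReal (le_max_of_le_right (le_max_right _ _))
    _ ≤ (ν : Measure X) (thickening ε A) + ENNReal.ofReal ε := by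
        exact add_le_add hβ' le_rfl
    _ < (μ : Measure X) A := hlt
  exact absurd hcontra (not_lt.mpr prob_le_one)

lemma LPdist_eq_one_iff (μ ν : ProbabilityMeasure X) :
    LPdist μ ν = 1 ↔ ∀ x ∈ mSupport μ, ∀ y ∈ mSupport ν, 1 ≤ dist x y :=
  ⟨sep_of_LPdist_eq_one, LPdist_eq_one_of_sep⟩

lemma LPdist_comm_one {μ ν : ProbabilityMeasure X} (h : LPdist μ ν = 1) : LPdist ν μ = 1 := by
  rw [LPdist_eq_one_iff] at h ⊢
  intro y hy x hx
  rw [dist_comm]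
  exact h x hx y hy

end LPaux

namespace LPaux

variable {X : Type*} [MetricSpace X] [MeasurableSpace X]

lemma diracPM_coe (x : X) : (diracPM x : Measure X) = Measure.dirac x := rfl

lemma mSupport_diracPM [OpensMeasurableSpace X] (x : X) : mSupport (diracPM x) = {x} := by
  ext y
  simp only [mSupport, mem_setOf_eq, mem_singleton_iff, diracPM_coe]
  constructor
  · intro h
    by_contra hne
    have hd : 0 < dist x y := dist_pos.mpr (fun hh => hne hh.symm)
    have := h (dist x y) hd
    rw [Measure.dirac_apply' _ measurableSet_ball] at this
    have hnot : x ∉ ball y (dist x y) := by simp [mem_ball]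
    rw [Set.indicator_of_notMem hnot] at this
    exact absurd this (lt_irrefl 0)
  · rintro rfl r hr
    rw [Measure.dirac_apply' _ measurableSet_ball]
    simp [mem_ball, hr]

lemma eq_diracPM_of_mSupport_subset [OpensMeasurableSpace X] [SecondCountableTopology X]
    {μ : ProbabilityMeasure X} {x : X} (h : mSupport μ ⊆ {x}) : μ = diracPM x := by
  have hx : mSupport μ = {x} := by
    obtain ⟨z, hz⟩ := mSupport_nonempty μ
    have := h hz
    rw [mem_singleton_iff] at this
    subst this
    exact le_antisymm h (singleton_subset_iff.mpr hz)
  have hcompl : (μ : Measure X) {x}ᶜ = 0 := by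
    refine measure_zero_of_disjoint_mSupport μ ?_
    rw [hx]
    simp
  apply Subtype.ext
  show (μ : Measure X) = (diracPM x : Measure X)
  ext s hs
  rw [diracPM_coe, Measure.dirac_apply' _ hs]
  by_cases hxs : x ∈ s
  · have h1 : (μ : Measure X) s = 1 := by
      refine le_antisymm prob_le_one ?_
      have : (μ : Measure X) {x} = 1 := by
        have := measure_mSupport μ
        rwa [hx] at this
      calc (1:ENNReal) = (μ : Measure X) {x} := this.symm
      _ ≤ (μ : Measure X) s := measure_mono (singleton_subset_iff.mpr hxs)
    rw [h1, indicator_of_mem hxs]; rfl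
  · have h1 : (μ : Measure X) s = 0 :=
      measure_mono_null (fun z hz (hzx : z ∈ ({x} : Set X)) => hxs (hzx ▸ hz)) hcompl
    rw [h1, indicator_of_notMem hxs]

lemma diracPM_injective [OpensMeasurableSpace X] : Function.Injective (diracPM (X := X)) := by
  intro a b h
  have := congrArg mSupport h
  rw [mSupport_diracPM, mSupport_diracPM] at this
  exact singleton_eq_singleton_iff.mp this

end LPaux

namespace LPaux

open Filter Topology

variable {X : Type*} [MetricSpace X] [MeasurableSpace X] [OpensMeasurableSpace X]

lemma LPdist_self (μ : ProbabilityMeasure X) : LPdist μ μ = 0 := by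
  have hset : LPset μ μ = Ioi (0:ℝ) := by
    ext ε
    constructor
    · exact fun h => h.1
    · intro (hε : 0 < ε)
      refine ⟨hε, fun A _ => ?_⟩
      exact le_trans (measure_mono (self_subset_thickening hε A)) le_self_add
  rw [LPdist_def, hset, csInf_Ioi]

lemma le_on_closed {μ ν : ProbabilityMeasure X}
    (h : ∀ ε : ℝ, 0 < ε → ε ∈ LPset μ ν) {C : Set X} (hC : IsClosed C) :
    (μ : Measure X) C ≤ (ν : Measure X) C := by
  have hfin : ∃ R > 0, (ν : Measure X) (thickening R C) ≠ ⊤ :=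
    ⟨1, one_pos, measure_ne_top _ _⟩
  have htends : Tendsto (fun r : ℝ => (ν : Measure X) (thickening r C) + ENNReal.ofReal r)
      (𝓝[>] 0) (𝓝 ((ν : Measure X) C)) := by
    have h1 := tendsto_measure_thickening_of_isClosed hfin hC
    have h0 : Tendsto (fun r : ℝ => r) (𝓝[>] (0:ℝ)) (𝓝 (0:ℝ)) :=
      tendsto_id.mono_left nhdsWithin_le_nhds
    have h2 := ENNReal.tendsto_ofReal h0
    rw [ENNReal.ofReal_zero] at h2
    simpa using h1.add h2
  refine ge_of_tendsto htends ?_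
  filter_upwards [self_mem_nhdsWithin] with r hr
  exact (h r hr).2 C hC.measurableSet

lemma mem_swap {μ ν : ProbabilityMeasure X} {ε : ℝ} (h : ε ∈ LPset μ ν) : ε ∈ LPset ν μ := by
  refine ⟨h.1, fun B hB => ?_⟩
  have hm : MeasurableSet (thickening ε B)ᶜ := isOpen_thickening.measurableSet.compl
  have key := h.2 _ hm
  have hsub : thickening ε (thickening ε B)ᶜ ⊆ Bᶜ := by
    intro z hz hzB
    obtain ⟨w, hw, hd⟩ := mem_thickening_iff.mp hz
    exact hw (mem_thickening_iff.mpr ⟨z, hzB, by rwa [dist_comm]⟩)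
  have key2 : (μ : Measure X) (thickening ε B)ᶜ ≤ (ν : Measure X) Bᶜ + ENNReal.ofReal ε :=
    key.trans (add_le_add (measure_mono hsub) le_rfl)
  have hmc : (μ : Measure X) (thickening ε B)ᶜ = 1 - (μ : Measure X) (thickening ε B) := by
    rw [measure_compl isOpen_thickening.measurableSet (measure_ne_top _ _), measure_univ]
  have h1 : (1:ENNReal) ≤ (ν : Measure X) Bᶜ + ENNReal.ofReal ε
      + (μ : Measure X) (thickening ε B) :=
    tsub_le_iff_right.mp (hmc ▸ key2)
  have h3 : (ν : Measure X) B + (ν : Measure X) Bᶜ = 1 := by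
    rw [measure_add_measure_compl hB, measure_univ]
  have hc : (ν : Measure X) Bᶜ ≠ ⊤ := measure_ne_top _ _
  rw [← ENNReal.add_le_add_iff_right hc, h3]
  calc (1:ENNReal) ≤ (ν : Measure X) Bᶜ + ENNReal.ofReal ε
      + (μ : Measure X) (thickening ε B) := h1
  _ = (μ : Measure X) (thickening ε B) + ENNReal.ofReal ε + (ν : Measure X) Bᶜ := by ring

lemma eq_of_LPdist_eq_zero [BorelSpace X] {μ ν : ProbabilityMeasure X}
    (h : LPdist μ ν = 0) : μ = ν := by
  have hmem : ∀ ε : ℝ, 0 < ε → ε ∈ LPset μ ν := fun ε hε => mem_of_LPdist_eq_zero h hε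
  have hmem' : ∀ ε : ℝ, 0 < ε → ε ∈ LPset ν μ := fun ε hε => mem_swap (hmem ε hε)
  have heq : ∀ C : Set X, IsClosed C → (μ : Measure X) C = (ν : Measure X) C := fun C hC =>
    le_antisymm (le_on_closed hmem hC) (le_on_closed hmem' hC)
  apply Subtype.ext
  show (μ : Measure X) = (ν : Measure X)
  refine ext_of_generate_finite {s : Set X | IsClosed s} ?_ ?_ (fun s hs => heq s hs) ?_
  · rw [BorelSpace.measurable_eq (α := X), borel_eq_generateFrom_isClosed]
  · exact fun s hs t ht _ => hs.inter ht
  · simp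

end LPaux

namespace LPaux

section Char

variable {X : Type*} [NormedAddCommGroup X] [NormedSpace ℝ X]
  [MeasurableSpace X] [OpensMeasurableSpace X] [SecondCountableTopology X]

lemma exists_far_near {x z : X} (hz : z ≠ x) : ∃ y : X, 1 ≤ dist x y ∧ dist z y < 1 := by
  by_cases h1 : 1 ≤ dist x z
  · exact ⟨z, h1, by simp⟩
  · push_neg at h1
    have hzx : (0:ℝ) < ‖z - x‖ := by
      rw [norm_sub_pos_iff]
      exact hz
    set n : ℝ := ‖z - x‖ with hn
    have hne : n ≠ 0 := hzx.ne'
    have hn1 : n < 1 := by rwa [dist_eq_norm, norm_sub_rev] at h1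
    have hinv : (1:ℝ) ≤ n⁻¹ := by
      rw [← one_div]
      exact (le_div_iff₀ hzx).mpr (by linarith)
    refine ⟨x + n⁻¹ • (z - x), ?_, ?_⟩
    · rw [dist_eq_norm]
      have he : x - (x + n⁻¹ • (z - x)) = (-n⁻¹) • (z - x) := by module
      rw [he, norm_smul, Real.norm_eq_abs, abs_neg, abs_of_pos (inv_pos.mpr hzx), ← hn,
        inv_mul_cancel₀ hne]
    · rw [dist_eq_norm]
      have he : z - (x + n⁻¹ • (z - x)) = (1 - n⁻¹) • (z - x) := by module
      rw [he, norm_smul, Real.norm_eq_abs, ← hn, abs_of_nonpos (by linarith), neg_sub,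
        sub_mul, inv_mul_cancel₀ hne, one_mul]
      linarith

lemma U2_eq_singleton_iff (μ : ProbabilityMeasure X) :
    unitDistSet (unitDistSet {μ}) = {μ} ↔ ∃ x : X, μ = diracPM x := by
  constructor
  · intro h
    obtain ⟨a, ha⟩ := mSupport_nonempty μ
    have hda : diracPM a ∈ unitDistSet (unitDistSet {μ}) := by
      intro ν hν
      have h1 : LPdist μ ν = 1 := hν μ rfl
      have hsep := sep_of_LPdist_eq_one h1
      apply LPdist_eq_one_of_sep
      intro p hp q hq
      rw [mSupport_diracPM, mem_singleton_iff] at hq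
      rw [hq, dist_comm]
      exact hsep a ha p hp
    rw [h, mem_singleton_iff] at hda
    exact ⟨a, hda.symm⟩
  · rintro ⟨x, rfl⟩
    apply Subset.antisymm
    · intro ϑ hϑ
      rw [mem_singleton_iff]
      have hsub : mSupport ϑ ⊆ {x} := by
        intro z hz
        rw [mem_singleton_iff]
        by_contra hne
        obtain ⟨y, hy1, hy2⟩ := exists_far_near hne
        have hdy : diracPM y ∈ unitDistSet {diracPM x} := by
          intro κ hκ
          rw [mem_singleton_iff] at hκ
          subst hκ
          apply LPdist_eq_one_of_sep
          intro p hp q hq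
          rw [mSupport_diracPM, mem_singleton_iff] at hp hq
          subst hp; subst hq
          exact hy1
        have h1 : LPdist (diracPM y) ϑ = 1 := hϑ (diracPM y) hdy
        have hsep := sep_of_LPdist_eq_one h1
        have := hsep y (by rw [mSupport_diracPM]; exact rfl) z hz
        rw [dist_comm] at this
        linarith
      exact eq_diracPM_of_mSupport_subset hsub
    · intro ϑ hϑ
      rw [mem_singleton_iff] at hϑ
      subst hϑ
      intro ν hν
      exact LPdist_comm_one (hν _ rfl)

end Char
end LPaux

namespace LPaux

lemma image_unitDistSet {X : Type*} [MetricSpace X] [MeasurableSpace X]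
    (φ : ProbabilityMeasure X → ProbabilityMeasure X)
    (hsurj : Function.Surjective φ)
    (hiso : ∀ μ ν : ProbabilityMeasure X, LPdist (φ μ) (φ ν) = LPdist μ ν)
    (𝒜 : Set (ProbabilityMeasure X)) :
    φ '' unitDistSet 𝒜 = unitDistSet (φ '' 𝒜) := by
  ext ν
  constructor
  · rintro ⟨ν', hν', rfl⟩
    rintro κ ⟨μ, hμ, rfl⟩
    rw [hiso]
    exact hν' μ hμ
  · intro hν
    obtain ⟨ν', rfl⟩ := hsurj ν
    refine ⟨ν', fun μ hμ => ?_, rfl⟩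
    rw [← hiso]
    exact hν (φ μ) ⟨μ, hμ, rfl⟩

end LPaux


/-- A surjective Lévy–Prokhorov isometry maps the set of Dirac measures onto itself. -/
theorem image_dirac_eq_dirac {X : Type*} [NormedAddCommGroup X] [NormedSpace ℝ X]
    [CompleteSpace X] [SeparableSpace X] [MeasurableSpace X] [BorelSpace X]
    (φ : ProbabilityMeasure X → ProbabilityMeasure X)
    (hsurj : Function.Surjective φ)
    (hiso : ∀ μ ν : ProbabilityMeasure X, LPdist (φ μ) (φ ν) = LPdist μ ν) :
    φ '' (Set.range fun x : X => diracPM x) = Set.range fun x : X => diracPM x := by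
  haveI : SecondCountableTopology X := UniformSpace.secondCountable_of_separable X
  have hinj : Function.Injective φ := by
    intro μ ν h
    apply LPaux.eq_of_LPdist_eq_zero
    rw [← hiso μ ν, h]
    exact LPaux.LPdist_self _
  have hU2 : ∀ μ : ProbabilityMeasure X,
      unitDistSet (unitDistSet {φ μ}) = φ '' unitDistSet (unitDistSet {μ}) := by
    intro μ
    calc unitDistSet (unitDistSet {φ μ})
        = unitDistSet (unitDistSet (φ '' {μ})) := by rw [Set.image_singleton]
    _ = unitDistSet (φ '' unitDistSet {μ}) := by
        rw [LPaux.image_unitDistSet φ hsurj hiso]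
    _ = φ '' unitDistSet (unitDistSet {μ}) :=
        (LPaux.image_unitDistSet φ hsurj hiso _).symm
  ext ν
  constructor
  · rintro ⟨κ, ⟨x, rfl⟩, rfl⟩
    have h1 : unitDistSet (unitDistSet {diracPM x}) = {diracPM x} :=
      (LPaux.U2_eq_singleton_iff _).mpr ⟨x, rfl⟩
    have h2 : unitDistSet (unitDistSet {φ (diracPM x)}) = {φ (diracPM x)} := by
      rw [hU2, h1, Set.image_singleton]
    obtain ⟨y, hy⟩ := (LPaux.U2_eq_singleton_iff _).mp h2
    exact ⟨y, hy.symm⟩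
  · rintro ⟨y, rfl⟩
    obtain ⟨μ, hμ⟩ := hsurj (diracPM y)
    have hd : unitDistSet (unitDistSet {φ μ}) = {φ μ} :=
      (LPaux.U2_eq_singleton_iff _).mpr ⟨y, hμ⟩
    rw [hU2 μ] at hd
    have hself : μ ∈ unitDistSet (unitDistSet {μ}) := by
      intro ν' hν'
      exact LPaux.LPdist_comm_one (hν' μ rfl)
    have hsing : unitDistSet (unitDistSet {μ}) = {μ} := by
      apply Set.Subset.antisymm
      · intro ϑ hϑ
        have hmem : φ ϑ ∈ ({φ μ} : Set (ProbabilityMeasure X)) :=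
          hd ▸ Set.mem_image_of_mem φ hϑ
        rw [Set.mem_singleton_iff] at hmem ⊢
        exact hinj hmem
      · intro ϑ hϑ
        rw [Set.mem_singleton_iff] at hϑ
        subst hϑ
        exact hself
    obtain ⟨x, hx⟩ := (LPaux.U2_eq_singleton_iff μ).mp hsing
    exact ⟨μ, ⟨x, hx.symm⟩, hμ⟩
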